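/- Let H be a real Hilbert space and let f₁, f₂: H → ℝ ∪ {+∞} be proper, lsc, and convex with f₁ almost strictly convex and dom f₁ ∩ int dom f₂ ≠ ∅. Then f₁ + f₂ is almost strictly convex. -/
import Mathlib


open scoped InnerProductSpace

variable {H : Type*} [NormedAddCommGroup H] [InnerProductSpace ℝ H] [CompleteSpace H]

/-- `f` is proper: not identically `⊤` and never `⊥`. -/
def IsProperFn (f : H → EReal) : Prop := (∃ x, f x ≠ ⊤) ∧ ∀ x, f x ≠ ⊥

/-- `f` is convex (as an extended-real-valued function). -/
def IsConvexFn (f : H → EReal) : Prop :=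
  ∀ x y : H, ∀ t : ℝ, 0 < t → t < 1 →
    f ((1 - t) • x + t • y) ≤ ((1 - t : ℝ) : EReal) * f x + ((t : ℝ) : EReal) * f y

/-- `f` is strictly convex on the set `s`. -/
def StrictConvexOnSet (f : H → EReal) (s : Set H) : Prop :=
  ∀ x ∈ s, ∀ y ∈ s, x ≠ y → ∀ t : ℝ, 0 < t → t < 1 →
    f ((1 - t) • x + t • y) < ((1 - t : ℝ) : EReal) * f x + ((t : ℝ) : EReal) * f y

/-- The effective domain of `f`. -/
def domFn (f : H → EReal) : Set H := {x | f x ≠ ⊤}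

/-- `f` is strictly convex (on its domain). -/
def IsStrictConvexFn (f : H → EReal) : Prop := StrictConvexOnSet f (domFn f)

/-- The convex subdifferential of `f` at `x`. -/
def subdiff (f : H → EReal) (x : H) : Set H :=
  {v | ∀ y : H, f x + ((⟪v, y - x⟫_ℝ : ℝ) : EReal) ≤ f y}

/-- The domain of the subdifferential. -/
def domSubdiff (f : H → EReal) : Set H := {x | (subdiff f x).Nonempty}

/-- `f` is almost strictly convex: strictly convex along every line segment in `dom ∂f`. -/
def AlmostStrictlyConvex (f : H → EReal) : Prop :=
  ∀ x₀ x₁ : H, x₀ ≠ x₁ → segment ℝ x₀ x₁ ⊆ domSubdiff f →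
    StrictConvexOnSet f (segment ℝ x₀ x₁)

/-- `∂f` is strictly monotone. -/
def StrictlyMonotoneSubdiff (f : H → EReal) : Prop :=
  ∀ x₀ x₁ v₀ v₁ : H, v₀ ∈ subdiff f x₀ → v₁ ∈ subdiff f x₁ → x₀ ≠ x₁ →
    0 < ⟪v₀ - v₁, x₀ - x₁⟫_ℝ

set_option linter.unusedSectionVars false

lemma convex_combo_le {f : H → EReal} (hc : IsConvexFn f) (hb : ∀ x, f x ≠ ⊥)
    {x y : H} {rx ry t : ℝ} (hx : f x ≤ (rx : EReal)) (hy : f y ≤ (ry : EReal))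
    (ht0 : 0 < t) (ht1 : t < 1) :
    f ((1 - t) • x + t • y) ≤ (((1 - t) * rx + t * ry : ℝ) : EReal) := by
  have hx' : f x ≠ ⊤ := fun h => by simp [h] at hx
  have hy' : f y ≠ ⊤ := fun h => by simp [h] at hy
  have hex : f x = ((f x).toReal : EReal) := (EReal.coe_toReal hx' (hb x)).symm
  have hey : f y = ((f y).toReal : EReal) := (EReal.coe_toReal hy' (hb y)).symm
  have h1 : (f x).toReal ≤ rx := by rw [hex, EReal.coe_le_coe_iff] at hx; exact hx
  have h2 : (f y).toReal ≤ ry := by rw [hey, EReal.coe_le_coe_iff] at hy; exact hy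
  calc f ((1 - t) • x + t • y)
      ≤ ((1 - t : ℝ) : EReal) * f x + ((t : ℝ) : EReal) * f y := hc x y t ht0 ht1
    _ = (((1 - t) * (f x).toReal + t * (f y).toReal : ℝ) : EReal) := by
        conv_lhs => rw [hex, hey]
        rw [← EReal.coe_mul, ← EReal.coe_mul, ← EReal.coe_add]
    _ ≤ (((1 - t) * rx + t * ry : ℝ) : EReal) := by
        rw [EReal.coe_le_coe_iff]
        have := sub_pos.mpr ht1
        nlinarith

lemma convex_epi {F : H → EReal} (hF : IsConvexFn F) (hb : ∀ x, F x ≠ ⊥)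
    {A : H × ℝ → ℝ}
    (hA : ∀ p q : H × ℝ, ∀ t : ℝ, A ((1 - t) • p + t • q) = (1 - t) * A p + t * A q) :
    Convex ℝ {p : H × ℝ | F p.1 ≤ ((A p : ℝ) : EReal)} := by
  intro p hp q hq α β hα hβ hαβ
  rcases eq_or_lt_of_le hα with h0 | hα0
  · have hβ1 : β = 1 := by linarith
    simp only [← h0, hβ1, zero_smul, one_smul, zero_add]
    exact hq
  rcases eq_or_lt_of_le hβ with h0 | hβ0
  · have hα1 : α = 1 := by linarith
    simp only [← h0, hα1, zero_smul, one_smul, add_zero]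
    exact hp
  · have hα' : α = 1 - β := by linarith
    have hβ1 : β < 1 := by linarith
    have key := convex_combo_le hF hb (x := p.1) (y := q.1) (rx := A p) (ry := A q)
      hp hq hβ0 hβ1
    have h1 : (α • p + β • q).1 = (1 - β) • p.1 + β • q.1 := by
      simp [Prod.fst_add, hα']
    have h2 : α • p + β • q = (1 - β) • p + β • q := by rw [hα']
    simp only [Set.mem_setOf_eq, h1, h2, hA p q β]
    exact key

-- Baire: an lsc convex proper function is bounded above near interior points of its domain

lemma bounded_above_near {f : H → EReal} (hb : ∀ x, f x ≠ ⊥)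
    (hlsc : LowerSemicontinuous f) (hc : IsConvexFn f) {w : H}
    (hw : w ∈ interior (domFn f)) :
    ∃ r > 0, ∃ M : ℝ, ∀ y ∈ Metric.ball w r, f y ≤ (M : EReal) := by
  obtain ⟨ρ, hρ0, hρ⟩ := Metric.isOpen_iff.1 isOpen_interior w hw
  have hball : Metric.ball w ρ ⊆ domFn f := (Metric.ball_subset_ball le_rfl).trans
    (hρ.trans interior_subset)
  -- closed sets covering the space
  set Dn : ℕ → Set H := fun n => {x | f x ≤ ((n : ℝ) : EReal)} ∪ (Metric.ball w ρ)ᶜ with hDn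
  have hclosed : ∀ n, IsClosed (Dn n) := by
    intro n
    refine IsClosed.union ?_ (Metric.isOpen_ball.isClosed_compl)
    exact hlsc.isClosed_preimage _
  have hcover : ⋃ n, Dn n = Set.univ := by
    ext x
    simp only [Set.mem_iUnion, Set.mem_univ, iff_true, hDn, Set.mem_union,
      Set.mem_setOf_eq, Set.mem_compl_iff]
    by_cases hx : x ∈ Metric.ball w ρ
    · have hxt : f x ≠ ⊤ := hball hx
      obtain ⟨n, hn⟩ := exists_nat_ge (f x).toReal
      refine ⟨n, Or.inl ?_⟩
      rw [← EReal.coe_toReal hxt (hb x)]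
      exact_mod_cast hn
    · exact ⟨0, Or.inr hx⟩
  have hdense := dense_iUnion_interior_of_closed hclosed hcover
  obtain ⟨x, hx1, hx2⟩ := hdense.exists_mem_open Metric.isOpen_ball
    ⟨w, Metric.mem_ball_self hρ0⟩
  obtain ⟨n, hn⟩ := Set.mem_iUnion.1 hx1
  -- x has a neighborhood inside Dn n and inside the ball
  have hopen : IsOpen (interior (Dn n) ∩ Metric.ball w ρ) :=
    isOpen_interior.inter Metric.isOpen_ball
  obtain ⟨r₀, hr₀0, hr₀⟩ := Metric.isOpen_iff.1 hopen x ⟨hn, hx2⟩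
  have hub : ∀ y ∈ Metric.ball x r₀, f y ≤ ((n : ℝ) : EReal) := by
    intro y hy
    have := hr₀ hy
    rcases interior_subset this.1 with h | h
    · exact h
    · exact absurd this.2 h
  -- propagate boundedness from x to w
  set b' : H := (2 : ℝ) • w - x with hb'
  have hb'mem : b' ∈ Metric.ball w ρ := by
    have : dist b' w = dist x w := by
      simp only [hb', dist_eq_norm, two_smul]
      rw [show w + w - x - w = -(x - w) by abel, norm_neg]
    rw [Metric.mem_ball, this]
    exact Metric.mem_ball.1 hx2
  have hb't : f b' ≠ ⊤ := hball hb'mem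
  refine ⟨r₀ / 2, by positivity, (1 / 2) * n + (1 / 2) * (f b').toReal, ?_⟩
  intro y hy
  set x' : H := (2 : ℝ) • y - b' with hx'
  have hx'mem : x' ∈ Metric.ball x r₀ := by
    have : x' - x = (2 : ℝ) • (y - w) := by
      simp only [hx', hb', smul_sub, two_smul]; abel
    rw [Metric.mem_ball, dist_eq_norm, this, norm_smul]
    simp only [Real.norm_ofNat]
    have := Metric.mem_ball.1 hy
    rw [dist_eq_norm] at this
    linarith
  have hcombo : (1 - (1 / 2 : ℝ)) • x' + (1 / 2 : ℝ) • b' = y := by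
    simp only [hx']
    rw [show (1 : ℝ) - 1 / 2 = 1 / 2 by norm_num, smul_sub, smul_smul]
    norm_num [two_smul]
  have := convex_combo_le hc hb (hub x' hx'mem)
    (le_of_eq (EReal.coe_toReal hb't (hb b')).symm) (by norm_num : (0:ℝ) < 1/2)
    (by norm_num : (1/2 : ℝ) < 1)
  rw [hcombo] at this
  convert this using 2
  norm_num

lemma sum_subdiff_finite {f₁ f₂ : H → EReal} (hb₁ : ∀ x, f₁ x ≠ ⊥) (hb₂ : ∀ x, f₂ x ≠ ⊥)
    {w : H} (hw₁ : f₁ w ≠ ⊤) (hw₂ : f₂ w ≠ ⊤) {z v : H}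
    (hv : v ∈ subdiff (fun x => f₁ x + f₂ x) z) : f₁ z ≠ ⊤ ∧ f₂ z ≠ ⊤ := by
  have h := hv w
  simp only at h
  have hne : f₁ w + f₂ w ≠ ⊤ := by
    rw [← EReal.coe_toReal hw₁ (hb₁ w), ← EReal.coe_toReal hw₂ (hb₂ w), ← EReal.coe_add]
    exact EReal.coe_ne_top _
  have hlhs : f₁ z + f₂ z + ((⟪v, w - z⟫_ℝ : ℝ) : EReal) ≠ ⊤ := ne_top_of_le_ne_top hne h
  constructor
  · intro h1
    rw [h1, EReal.top_add_of_ne_bot (hb₂ z), EReal.top_add_of_ne_bot (EReal.coe_ne_bot _)] at hlhs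
    exact hlhs rfl
  · intro h2
    rw [h2, EReal.add_top_of_ne_bot (hb₁ z), EReal.top_add_of_ne_bot (EReal.coe_ne_bot _)] at hlhs
    exact hlhs rfl

lemma subdiff_sum_nonempty {f₁ f₂ : H → EReal}
    (hp₁ : IsProperFn f₁) (hc₁ : IsConvexFn f₁)
    (hp₂ : IsProperFn f₂) (hlsc₂ : LowerSemicontinuous f₂) (hc₂ : IsConvexFn f₂)
    (hq : (domFn f₁ ∩ interior (domFn f₂)).Nonempty)
    {z v : H} (hv : v ∈ subdiff (fun x => f₁ x + f₂ x) z) :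
    (subdiff f₁ z).Nonempty := by
  obtain ⟨w, hw₁, hw₂⟩ := hq
  have hw₂' : f₂ w ≠ ⊤ := interior_subset hw₂
  obtain ⟨hz₁, hz₂⟩ := sum_subdiff_finite hp₁.2 hp₂.2 hw₁ hw₂' hv
  set a : ℝ := (f₁ z).toReal with ha
  set b : ℝ := (f₂ z).toReal with hb
  have ha' : f₁ z = (a : EReal) := (EReal.coe_toReal hz₁ (hp₁.2 z)).symm
  have hb' : f₂ z = (b : EReal) := (EReal.coe_toReal hz₂ (hp₂.2 z)).symm
  have key : ∀ y : H, ((a + b + ⟪v, y - z⟫_ℝ : ℝ) : EReal) ≤ f₁ y + f₂ y := by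
    intro y
    have h := hv y
    simp only at h
    rw [ha', hb'] at h
    calc ((a + b + ⟪v, y - z⟫_ℝ : ℝ) : EReal)
        = (a : EReal) + (b : EReal) + ((⟪v, y - z⟫_ℝ : ℝ) : EReal) := by
          rw [← EReal.coe_add, ← EReal.coe_add]
      _ ≤ f₁ y + f₂ y := h
  obtain ⟨r, hr0, M, hM⟩ := bounded_above_near hp₂.2 hlsc₂ hc₂ hw₂
  -- epigraph of f₁ and (shifted) hypograph of f₂
  set C : Set (H × ℝ) := {p | f₁ p.1 ≤ ((p.2 : ℝ) : EReal)} with hC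
  set D : Set (H × ℝ) := {p | f₂ p.1 ≤ ((a + b + ⟪v, p.1 - z⟫_ℝ - p.2 : ℝ) : EReal)} with hD
  have hCconv : Convex ℝ C := by
    apply convex_epi hc₁ hp₁.2 (A := fun p => p.2)
    intro p q t; simp
  have hDconv : Convex ℝ D := by
    apply convex_epi hc₂ hp₂.2 (A := fun p => a + b + ⟪v, p.1 - z⟫_ℝ - p.2)
    intro p q t
    have h1 : ((1 - t) • p + t • q).1 - z = (1 - t) • (p.1 - z) + t • (q.1 - z) := by
      simp only [Prod.fst_add, Prod.smul_fst]
      module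
    have h2 : ((1 - t) • p + t • q).2 = (1 - t) * p.2 + t * q.2 := by simp
    rw [h1, h2, inner_add_right, real_inner_smul_right, real_inner_smul_right]
    ring
  -- the interior of D contains a slab around w
  set s₀ : ℝ := a + b - M - ‖v‖ * (‖w - z‖ + r) with hs₀
  have hslab : Metric.ball w r ×ˢ Set.Iio s₀ ⊆ D := by
    rintro ⟨y, s⟩ ⟨hy, hs⟩
    simp only [Set.mem_Iio] at hs
    simp only [hD, Set.mem_setOf_eq]
    refine le_trans (hM y hy) ?_
    rw [EReal.coe_le_coe_iff]
    have hip : -(‖v‖ * ‖y - z‖) ≤ ⟪v, y - z⟫_ℝ := neg_le_of_abs_le (abs_real_inner_le_norm v (y - z))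
    have hyz : ‖y - z‖ ≤ ‖w - z‖ + r := by
      have : ‖y - w‖ < r := by rw [← dist_eq_norm]; exact hy
      calc ‖y - z‖ ≤ ‖y - w‖ + ‖w - z‖ := norm_sub_le_norm_sub_add_norm_sub y w z
        _ ≤ r + ‖w - z‖ := by linarith
        _ = ‖w - z‖ + r := by ring
    have hvnn : (0:ℝ) ≤ ‖v‖ := norm_nonneg v
    nlinarith [mul_le_mul_of_nonneg_left hyz hvnn]
  have hwint : ((w, s₀ - 1) : H × ℝ) ∈ interior D := by
    apply interior_maximal hslab (Metric.isOpen_ball.prod isOpen_Iio)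
    exact ⟨Metric.mem_ball_self hr0, by simp⟩
  -- interior D and C are disjoint
  have hdisj : Disjoint (interior D) C := by
    rw [Set.disjoint_left]
    rintro ⟨y, s⟩ hpD hpC
    obtain ⟨ε, hε0, hε⟩ := Metric.isOpen_iff.1 isOpen_interior _ hpD
    have hin : ((y, s + ε / 2) : H × ℝ) ∈ D := by
      apply interior_subset
      apply hε
      rw [Metric.mem_ball]
      have : dist ((y, s + ε / 2) : H × ℝ) (y, s) = ε / 2 := by
        rw [Prod.dist_eq]
        simp only [Real.dist_eq, dist_self]
        rw [show s + ε / 2 - s = ε / 2 by ring, abs_of_pos (half_pos hε0)]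
        exact max_eq_right (le_of_lt (half_pos hε0))
      rw [this]; linarith
    simp only [hD, Set.mem_setOf_eq] at hin
    simp only [hC, Set.mem_setOf_eq] at hpC
    have hy₁ : f₁ y ≠ ⊤ := ne_top_of_le_ne_top (EReal.coe_ne_top _) hpC
    have hy₂ : f₂ y ≠ ⊤ := ne_top_of_le_ne_top (EReal.coe_ne_top _) hin
    have e₁ : f₁ y = ((f₁ y).toReal : EReal) := (EReal.coe_toReal hy₁ (hp₁.2 y)).symm
    have e₂ : f₂ y = ((f₂ y).toReal : EReal) := (EReal.coe_toReal hy₂ (hp₂.2 y)).symm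
    rw [e₁, EReal.coe_le_coe_iff] at hpC
    rw [e₂, EReal.coe_le_coe_iff] at hin
    have hk := key y
    rw [e₁, e₂, ← EReal.coe_add, EReal.coe_le_coe_iff] at hk
    linarith
  -- separation
  obtain ⟨L, u, hlt, hge⟩ := geometric_hahn_banach_open (hDconv.interior) isOpen_interior
    hCconv hdisj
  set c : ℝ := L (0, 1) with hc
  set φ : H → ℝ := fun y => L (y, 0) with hφ
  have hdecomp : ∀ (y : H) (s : ℝ), L (y, s) = φ y + s * c := by
    intro y s
    have : ((y, s) : H × ℝ) = (y, 0) + s • (0, 1) := by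
      simp [Prod.ext_iff]
    rw [this, map_add, map_smul]
    simp [hφ, hc, smul_eq_mul]
  have hCmem : ∀ (y : H) (s : ℝ), f₁ y ≤ (s : EReal) → u ≤ φ y + s * c := by
    intro y s hy
    have hmem : ((y, s) : H × ℝ) ∈ C := hy
    have := hge _ hmem
    rwa [hdecomp] at this
  have hcnonneg : 0 ≤ c := by
    by_contra hcneg
    push_neg at hcneg
    set s : ℝ := max a ((u - φ z - 1) / c) with hs
    have h1 : u ≤ φ z + s * c := by
      refine hCmem z s ?_
      rw [ha', EReal.coe_le_coe_iff]
      exact le_max_left _ _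
    have h2 : (u - φ z - 1) / c ≤ s := le_max_right _ _
    have h3 : s * c ≤ u - φ z - 1 := by
      have := mul_le_mul_of_nonpos_right h2 (le_of_lt hcneg)
      rwa [div_mul_cancel₀ _ (ne_of_lt hcneg)] at this
    linarith
  have hwC : u ≤ φ w + (f₁ w).toReal * c :=
    hCmem w _ (le_of_eq (EReal.coe_toReal hw₁ (hp₁.2 w)).symm)
  have hwD : φ w + (s₀ - 1) * c < u := by
    have := hlt _ hwint
    rwa [hdecomp] at this
  have hcpos : 0 < c := by
    rcases hcnonneg.eq_or_lt with h | h
    · exfalso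
      rw [← h] at hwC hwD
      simp only [mul_zero, add_zero] at hwC hwD
      linarith
    · exact h
  have hc' : c ≠ 0 := ne_of_gt hcpos
  -- the point (z, a) lies in D
  have hzD : ((z, a) : H × ℝ) ∈ D := by
    simp only [hD, Set.mem_setOf_eq, sub_self, inner_zero_right]
    rw [hb']
    rw [EReal.coe_le_coe_iff]
    linarith
  -- L (z, a) ≤ u by moving slightly into the interior of D
  have hzle : φ z + a * c ≤ u := by
    by_contra hgt
    push_neg at hgt
    set A : ℝ := L (w, s₀ - 1) with hA
    set B : ℝ := φ z + a * c with hB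
    set lam : ℝ := min (1/2) ((B - u) / (2 * (|B - A| + 1))) with hlam
    have hlam0 : 0 < lam := by
      apply lt_min (by norm_num)
      apply div_pos (by linarith) (by positivity)
    have hlam1 : lam < 1 := lt_of_le_of_lt (min_le_left _ _) (by norm_num)
    have hmem : lam • ((w, s₀ - 1) : H × ℝ) + (1 - lam) • ((z, a) : H × ℝ)
        ∈ interior D :=
      hDconv.combo_interior_closure_mem_interior hwint (subset_closure hzD)
        hlam0 (by linarith) (by ring)
    have hlt' := hlt _ hmem
    rw [map_add, map_smul, map_smul, smul_eq_mul, smul_eq_mul] at hlt'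
    have hLza : L ((z, a) : H × ℝ) = B := hdecomp z a
    rw [hLza, ← hA] at hlt'
    -- hlt' : lam * A + (1 - lam) * B < u
    have hle2 : lam ≤ (B - u) / (2 * (|B - A| + 1)) := min_le_right _ _
    have hpos2 : (0:ℝ) < 2 * (|B - A| + 1) := by positivity
    have h4 : lam * (2 * (|B - A| + 1)) ≤ B - u := by
      rw [← le_div_iff₀ hpos2]
      exact hle2
    have h5 : lam * (B - A) ≤ lam * |B - A| :=
      mul_le_mul_of_nonneg_left (le_abs_self _) (le_of_lt hlam0)
    nlinarith [abs_nonneg (B - A)]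
  -- Riesz representation
  set ψ : H →L[ℝ] ℝ := L.comp (ContinuousLinearMap.inl ℝ H ℝ) with hψ
  have hψval : ∀ y : H, ψ y = φ y := fun y => rfl
  set qv : H := (InnerProductSpace.toDual ℝ H).symm ψ with hqdef
  have hqval : ∀ y : H, ⟪qv, y⟫_ℝ = φ y := by
    intro y
    rw [← hψval, hqdef]
    exact InnerProductSpace.toDual_symm_apply
  have hφsub : ∀ y : H, φ (y - z) = φ y - φ z := by
    intro y
    have hpt : ((y - z, 0) : H × ℝ) = (y, 0) - (z, 0) := by simp
    simp only [hφ]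
    rw [hpt, map_sub]
  refine ⟨(-c⁻¹) • qv, ?_⟩
  intro y
  by_cases hy : f₁ y = ⊤
  · rw [hy]; exact le_top
  · have hy' : f₁ y = ((f₁ y).toReal : EReal) := (EReal.coe_toReal hy (hp₁.2 y)).symm
    set ry : ℝ := (f₁ y).toReal with hry
    have h1 : u ≤ φ y + ry * c := hCmem y ry (le_of_eq hy')
    have h2 : ⟪(-c⁻¹) • qv, y - z⟫_ℝ = -c⁻¹ * (φ y - φ z) := by
      rw [real_inner_smul_left, hqval, hφsub]
    rw [ha', hy', h2, ← EReal.coe_add, EReal.coe_le_coe_iff]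
    -- goal : a + -c⁻¹ * (φ y - φ z) ≤ ry
    have key2 : φ z - φ y ≤ (ry - a) * c := by nlinarith
    have h6 : (φ z - φ y) * c⁻¹ ≤ (ry - a) * c * c⁻¹ :=
      mul_le_mul_of_nonneg_right key2 (inv_nonneg.mpr hcnonneg)
    rw [mul_assoc, mul_inv_cancel₀ hc', mul_one] at h6
    nlinarith

theorem stmt15 (f₁ f₂ : H → EReal)
    (hp₁ : IsProperFn f₁) (hlsc₁ : LowerSemicontinuous f₁) (hc₁ : IsConvexFn f₁)
    (hp₂ : IsProperFn f₂) (hlsc₂ : LowerSemicontinuous f₂) (hc₂ : IsConvexFn f₂)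
    (ha : AlmostStrictlyConvex f₁)
    (hq : (domFn f₁ ∩ interior (domFn f₂)).Nonempty) :
    AlmostStrictlyConvex (fun x => f₁ x + f₂ x) := by
  intro x₀ x₁ hne hseg
  obtain ⟨w, hw₁, hw₂⟩ := hq
  have hw₂' : f₂ w ≠ ⊤ := interior_subset hw₂
  have hfin : ∀ p ∈ segment ℝ x₀ x₁, f₁ p ≠ ⊤ ∧ f₂ p ≠ ⊤ := by
    intro p hp
    obtain ⟨v, hv⟩ := hseg hp
    exact sum_subdiff_finite hp₁.2 hp₂.2 hw₁ hw₂' hv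
  have hseg₁ : segment ℝ x₀ x₁ ⊆ domSubdiff f₁ := by
    intro p hp
    obtain ⟨v, hv⟩ := hseg hp
    exact subdiff_sum_nonempty hp₁ hc₁ hp₂ hlsc₂ hc₂ ⟨w, hw₁, hw₂⟩ hv
  have hsc₁ := ha x₀ x₁ hne hseg₁
  intro x hx y hy hxy t ht0 ht1
  obtain ⟨hx1, hx2⟩ := hfin x hx
  obtain ⟨hy1, hy2⟩ := hfin y hy
  obtain ⟨rx, hrx⟩ : ∃ r : ℝ, f₁ x = (r : EReal) := ⟨_, (EReal.coe_toReal hx1 (hp₁.2 x)).symm⟩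
  obtain ⟨sx, hsx⟩ : ∃ r : ℝ, f₂ x = (r : EReal) := ⟨_, (EReal.coe_toReal hx2 (hp₂.2 x)).symm⟩
  obtain ⟨ry, hry⟩ : ∃ r : ℝ, f₁ y = (r : EReal) := ⟨_, (EReal.coe_toReal hy1 (hp₁.2 y)).symm⟩
  obtain ⟨sy, hsy⟩ : ∃ r : ℝ, f₂ y = (r : EReal) := ⟨_, (EReal.coe_toReal hy2 (hp₂.2 y)).symm⟩
  have hstrict : f₁ ((1 - t) • x + t • y) < (((1 - t) * rx + t * ry : ℝ) : EReal) := by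
    have h := hsc₁ x hx y hy hxy t ht0 ht1
    rwa [hrx, hry, ← EReal.coe_mul, ← EReal.coe_mul, ← EReal.coe_add] at h
  have hf2le : f₂ ((1 - t) • x + t • y) ≤ (((1 - t) * sx + t * sy : ℝ) : EReal) :=
    convex_combo_le hc₂ hp₂.2 (le_of_eq hsx) (le_of_eq hsy) ht0 ht1
  have hz1 : f₁ ((1 - t) • x + t • y) ≠ ⊤ := ne_top_of_lt hstrict
  have hz2 : f₂ ((1 - t) • x + t • y) ≠ ⊤ := ne_top_of_le_ne_top (EReal.coe_ne_top _) hf2le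
  obtain ⟨e₁, he₁⟩ : ∃ r : ℝ, f₁ ((1 - t) • x + t • y) = (r : EReal) :=
    ⟨_, (EReal.coe_toReal hz1 (hp₁.2 _)).symm⟩
  obtain ⟨e₂, he₂⟩ : ∃ r : ℝ, f₂ ((1 - t) • x + t • y) = (r : EReal) :=
    ⟨_, (EReal.coe_toReal hz2 (hp₂.2 _)).symm⟩
  rw [he₁, EReal.coe_lt_coe_iff] at hstrict
  rw [he₂, EReal.coe_le_coe_iff] at hf2le
  show f₁ ((1 - t) • x + t • y) + f₂ ((1 - t) • x + t • y) <
    ((1 - t : ℝ) : EReal) * (f₁ x + f₂ x) + ((t : ℝ) : EReal) * (f₁ y + f₂ y)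
  rw [he₁, he₂, hrx, hry, hsx, hsy, ← EReal.coe_add, ← EReal.coe_add, ← EReal.coe_add,
    ← EReal.coe_mul, ← EReal.coe_mul, ← EReal.coe_add, EReal.coe_lt_coe_iff]
  nlinarith [sub_pos.mpr ht1]
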